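/- When the update penalty is zero, the self-triggered value function coincides with the classic value function: if V is the unique fixed point of the classic Bellman operator T and V_st is the unique fixed point of the optimized-lookahead operator T_O with O = 0 (for any T̄ ≥ 1), then V_st(x) = V(x) for every x ∈ X. -/

import Mathlib

open scoped BigOperators

/-- Expectation of `f` under a probability mass function `p` on a finite type. -/
noncomputable def expect {X : Type*} [Fintype X] (p : PMF X) (f : X → ℝ) : ℝ :=
  ∑ y, (p y).toReal * f y

/-- The classic Bellman operator `(T v)(x) = min_a ( c(x,a) + β · E_{y∼P(x,a)}[v(y)] )`. -/
noncomputable def bellman {X A : Type*} [Fintype X] [Fintype A]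
    (P : X → A → PMF X) (c : X × A → ℝ) (β : ℝ) (v : X → ℝ) : X → ℝ :=
  fun x => ⨅ a : A, (c (x, a) + β * expect (P x a) v)

/-- The skip kernel: distribution of the state after `t` steps from `x`, holding action `a`. -/
noncomputable def skip {X A : Type*} (P : X → A → PMF X) (x : X) (a : A) : ℕ → PMF X
  | 0 => PMF.pure x
  | t + 1 => (skip P x a t).bind fun y => P y a

/-- The consolidated cost `c̄(x,a,Δt) = ∑_{t=0}^{Δt−1} β^t · E_{y∼P̄(x,a,t)}[c(y,a)]`. -/
noncomputable def cbar {X A : Type*} [Fintype X]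
    (P : X → A → PMF X) (c : X × A → ℝ) (β : ℝ) (x : X) (a : A) (Δt : ℕ) : ℝ :=
  ∑ t ∈ Finset.range Δt, β ^ t * expect (skip P x a t) (fun y => c (y, a))

/-- The optimized-lookahead Bellman operator
`(T_O v)(x) = min_{a, 1 ≤ Δt ≤ T̄} ( c̄(x,a,Δt) + β^Δt ( O + E_{y∼P̄(x,a,Δt)}[v(y)] ) )`. -/
noncomputable def TO {X A : Type*} [Fintype X] [Fintype A]
    (P : X → A → PMF X) (c : X × A → ℝ) (β O : ℝ) (Tb : ℕ) (v : X → ℝ) : X → ℝ :=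
  fun x => ⨅ a : A, ⨅ Δt : {n : ℕ // n ∈ Finset.Icc 1 Tb},
    (cbar P c β x a Δt.val + β ^ Δt.val * (O + expect (skip P x a Δt.val) v))

/-- The evaluation operator of a stationary self-triggering policy `μ = (π, τ)`. -/
noncomputable def Tpol {X A : Type*} [Fintype X]
    (P : X → A → PMF X) (c : X × A → ℝ) (β O : ℝ)
    (π : X → A) (τ : X → ℕ) (v : X → ℝ) : X → ℝ :=
  fun x => cbar P c β x (π x) (τ x) + β ^ (τ x) * (O + expect (skip P x (π x) (τ x)) v)


lemma sum_toReal_pmf {X : Type*} [Fintype X] (p : PMF X) : ∑ y, (p y).toReal = 1 := by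
  rw [← ENNReal.toReal_sum (fun y _ => PMF.apply_ne_top p y), ← tsum_fintype (L := .unconditional _), PMF.tsum_coe,
    ENNReal.toReal_one]

lemma expect_pure {X : Type*} [Fintype X] (x : X) (f : X → ℝ) :
    expect (PMF.pure x) f = f x := by
  rw [expect, Finset.sum_eq_single x]
  · simp
  · intro y _ hy; simp [PMF.pure_apply, hy]
  · intro h; exact absurd (Finset.mem_univ x) h

lemma expect_bind {X : Type*} [Fintype X] (p : PMF X) (q : X → PMF X) (f : X → ℝ) :
    expect (p.bind q) f = expect p fun y => expect (q y) f := by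
  have h : ∀ z, ((p.bind q) z).toReal = ∑ y, (p y).toReal * (q y z).toReal := by
    intro z
    rw [PMF.bind_apply, tsum_fintype, ENNReal.toReal_sum]
    · simp [ENNReal.toReal_mul]
    · intro y _
      exact ENNReal.mul_ne_top (PMF.apply_ne_top _ _) (PMF.apply_ne_top _ _)
  simp only [expect, h, Finset.sum_mul]
  rw [Finset.sum_comm]
  simp [Finset.mul_sum, mul_assoc]

lemma abs_expect_sub {X : Type*} [Fintype X] (p : PMF X) (v w : X → ℝ) (M : ℝ)
    (h : ∀ y, |v y - w y| ≤ M) : |expect p v - expect p w| ≤ M := by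
  have he : expect p v - expect p w = ∑ y, (p y).toReal * (v y - w y) := by
    simp [expect, mul_sub, Finset.sum_sub_distrib]
  rw [he]
  calc |∑ y, (p y).toReal * (v y - w y)| ≤ ∑ y, (p y).toReal * |v y - w y| := by
        refine (Finset.abs_sum_le_sum_abs _ _).trans ?_
        refine Finset.sum_le_sum fun y _ => ?_
        rw [abs_mul, abs_of_nonneg ENNReal.toReal_nonneg]
    _ ≤ ∑ y, (p y).toReal * M :=
        Finset.sum_le_sum fun y _ => mul_le_mul_of_nonneg_left (h y) ENNReal.toReal_nonneg
    _ = M := by rw [← Finset.sum_mul, sum_toReal_pmf, one_mul]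

lemma expect_nonneg {X : Type*} [Fintype X] (p : PMF X) {f : X → ℝ} (hf : ∀ y, 0 ≤ f y) :
    0 ≤ expect p f :=
  Finset.sum_nonneg fun y _ => mul_nonneg ENNReal.toReal_nonneg (hf y)

lemma expect_comb {X : Type*} [Fintype X] (p : PMF X) (f g h : X → ℝ) (r : ℝ) :
    expect p (fun y => f y + r * g y - h y)
      = expect p f + r * expect p g - expect p h := by
  simp only [expect, Finset.mul_sum]
  rw [← Finset.sum_add_distrib, ← Finset.sum_sub_distrib]
  congr 1; ext y; ring

lemma abs_ciInf_sub {ι : Type*} [Nonempty ι] [Finite ι] (f g : ι → ℝ) (M : ℝ)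
    (h : ∀ i, |f i - g i| ≤ M) : |(⨅ i, f i) - ⨅ i, g i| ≤ M := by
  have bf : BddBelow (Set.range f) := Set.Finite.bddBelow (Set.finite_range f)
  have bg : BddBelow (Set.range g) := Set.Finite.bddBelow (Set.finite_range g)
  rw [abs_sub_le_iff]
  constructor
  · have : (⨅ i, f i) - M ≤ ⨅ i, g i := le_ciInf fun i => by
      have h1 := ciInf_le bf i
      have h2 := (abs_sub_le_iff.mp (h i)).1
      linarith
    linarith
  · have : (⨅ i, g i) - M ≤ ⨅ i, f i := le_ciInf fun i => by
      have h1 := ciInf_le bg i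
      have h2 := (abs_sub_le_iff.mp (h i)).2
      linarith
    linarith

theorem Vst_eq_V_of_zero_penalty {X A : Type*} [Fintype X] [Nonempty X] [Fintype A] [Nonempty A]
    (P : X → A → PMF X) (c : X × A → ℝ) (hc : ∀ (x : X) (a : A), 0 ≤ c (x, a))
    (β : ℝ) (hβ0 : 0 ≤ β) (hβ1 : β < 1)
    (Tb : ℕ) (hTb : 1 ≤ Tb)
    (V : X → ℝ) (hV : bellman P c β V = V)
    (Vst : X → ℝ) (hVst : TO P c β 0 Tb Vst = Vst) :
    ∀ x : X, Vst x = V x := by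
  have hskip1 : ∀ (x : X) (a : A), skip P x a 1 = P x a := by
    intro x a; simp [skip, PMF.pure_bind]
  have hcbar1 : ∀ (x : X) (a : A), cbar P c β x a 1 = c (x, a) := by
    intro x a; simp [cbar, skip, expect_pure]
  set g : X → A → ℕ → ℝ := fun x a n =>
    cbar P c β x a n + β ^ n * expect (skip P x a n) V with hg
  have hVle : ∀ (y : X) (a : A), V y ≤ c (y, a) + β * expect (P y a) V := by
    intro y a
    conv_lhs => rw [← hV]
    exact ciInf_le (Set.Finite.bddBelow (Set.finite_range _)) a
  have hstep : ∀ (x : X) (a : A) (n : ℕ), g x a n ≤ g x a (n + 1) := by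
    intro x a n
    have h1 : cbar P c β x a (n + 1) = cbar P c β x a n
        + β ^ n * expect (skip P x a n) (fun y => c (y, a)) := by
      simp [cbar, Finset.sum_range_succ]
    have h2 : expect (skip P x a (n + 1)) V
        = expect (skip P x a n) (fun y => expect (P y a) V) := by
      simp [skip, expect_bind]
    have h3 : 0 ≤ expect (skip P x a n)
        (fun y => c (y, a) + β * expect (P y a) V - V y) :=
      expect_nonneg _ fun y => by have := hVle y a; linarith
    rw [expect_comb] at h3
    have hb : 0 ≤ β ^ n := pow_nonneg hβ0 n
    simp only [hg, h1, h2, pow_succ]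
    nlinarith [mul_nonneg hb h3]
  have hmono : ∀ (x : X) (a : A) (n : ℕ), 1 ≤ n → g x a 1 ≤ g x a n := by
    intro x a n hn
    induction n, hn using Nat.le_induction with
    | base => exact le_refl _
    | succ m hm ih => exact ih.trans (hstep x a m)
  haveI : Nonempty {n : ℕ // n ∈ Finset.Icc 1 Tb} := ⟨⟨1, by simp [hTb]⟩⟩
  have hTOV : TO P c β 0 Tb V = V := by
    funext x
    have hinner : ∀ a : A,
        (⨅ Δt : {n : ℕ // n ∈ Finset.Icc 1 Tb},
          (cbar P c β x a Δt.val + β ^ Δt.val * (0 + expect (skip P x a Δt.val) V)))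
        = c (x, a) + β * expect (P x a) V := by
      intro a
      have hval : ∀ n : ℕ,
          cbar P c β x a n + β ^ n * (0 + expect (skip P x a n) V) = g x a n := by
        intro n; simp [hg]
      have hg1 : g x a 1 = c (x, a) + β * expect (P x a) V := by
        simp [hg, hcbar1, hskip1, pow_one]
      refine le_antisymm ?_ ?_
      · calc (⨅ Δt : {n : ℕ // n ∈ Finset.Icc 1 Tb},
              (cbar P c β x a Δt.val + β ^ Δt.val * (0 + expect (skip P x a Δt.val) V)))
            ≤ cbar P c β x a 1 + β ^ 1 * (0 + expect (skip P x a 1) V) :=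
              ciInf_le (Set.Finite.bddBelow (Set.finite_range _))
                (⟨1, by simp [hTb]⟩ : {n : ℕ // n ∈ Finset.Icc 1 Tb})
          _ = c (x, a) + β * expect (P x a) V := by rw [hval, hg1]
      · refine le_ciInf fun Δt => ?_
        rw [hval, ← hg1]
        exact hmono x a Δt.val (Finset.mem_Icc.mp Δt.2).1
    simp only [TO, hinner]
    conv_rhs => rw [← hV]
    rfl
  set M : ℝ := Finset.univ.sup' Finset.univ_nonempty (fun x : X => |Vst x - V x|) with hM
  have hMle : ∀ x : X, |Vst x - V x| ≤ M := fun x =>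
    Finset.le_sup' (fun x : X => |Vst x - V x|) (Finset.mem_univ x)
  have hM0 : 0 ≤ M := le_trans (abs_nonneg _) (hMle (Classical.arbitrary X))
  have key : ∀ x : X, |Vst x - V x| ≤ β * M := by
    intro x
    have h1 : Vst x = TO P c β 0 Tb Vst x := by rw [hVst]
    have h2 : V x = TO P c β 0 Tb V x := by rw [hTOV]
    rw [h1, h2]
    simp only [TO]
    refine abs_ciInf_sub _ _ _ fun a => ?_
    refine abs_ciInf_sub _ _ _ fun Δt => ?_
    have hβn : β ^ Δt.val ≤ β := by
      calc β ^ Δt.val ≤ β ^ 1 :=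
            pow_le_pow_of_le_one hβ0 hβ1.le (Finset.mem_Icc.mp Δt.2).1
        _ = β := pow_one β
    have he := abs_expect_sub (skip P x a Δt.val) Vst V M hMle
    have hrw : cbar P c β x a Δt.val + β ^ Δt.val * (0 + expect (skip P x a Δt.val) Vst)
        - (cbar P c β x a Δt.val + β ^ Δt.val * (0 + expect (skip P x a Δt.val) V))
        = β ^ Δt.val * (expect (skip P x a Δt.val) Vst - expect (skip P x a Δt.val) V) := by
      ring
    rw [hrw, abs_mul, abs_of_nonneg (pow_nonneg hβ0 _)]
    calc β ^ Δt.val * |expect (skip P x a Δt.val) Vst - expect (skip P x a Δt.val) V|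
        ≤ β ^ Δt.val * M := mul_le_mul_of_nonneg_left he (pow_nonneg hβ0 _)
      _ ≤ β * M := mul_le_mul_of_nonneg_right hβn hM0
  have hMM : M ≤ β * M := Finset.sup'_le _ _ fun x _ => key x
  have hMzero : M ≤ 0 := by nlinarith
  intro x
  have h0 : |Vst x - V x| = 0 :=
    le_antisymm (le_trans (hMle x) hMzero) (abs_nonneg _)
  have := abs_eq_zero.mp h0
  linarith
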